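/- Let f : ℝ → ℝ be odd and three times continuously differentiable, let a > 0 satisfy f(a) = 0, f'(0) > 0, f'(a) < 0, and f'''(x) < 0 for all x ∈ (0, a). Let M₁, M₂ > 0 satisfy -f'(0)/f'(a) < M₁/M₂ < -f'(a)/f'(0), let x₂ = x₁ + a, and set v(x) = M₁ f(x - x₁) + M₂ f(x - x₂). Then v has exactly one zero x̂ in the open interval (x₁, x₂), and v'(x̂) > 0. -/

import Mathlib

open Set

lemma twoSpike_hasDerivAt {g : ℝ → ℝ} (hg : Differentiable ℝ g) (M₁ M₂ x₁ x₂ x : ℝ) :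
    HasDerivAt (fun y => M₁ * g (y - x₁) + M₂ * g (y - x₂))
      (M₁ * deriv g (x - x₁) + M₂ * deriv g (x - x₂)) x := by
  have h1 : HasDerivAt (fun y => g (y - x₁)) (deriv g (x - x₁)) x := by
    simpa [Function.comp_def] using
      (hg (x - x₁)).hasDerivAt.comp x ((hasDerivAt_id x).sub_const x₁)
  have h2 : HasDerivAt (fun y => g (y - x₂)) (deriv g (x - x₂)) x := by
    simpa [Function.comp_def] using
      (hg (x - x₂)).hasDerivAt.comp x ((hasDerivAt_id x).sub_const x₂)
  exact (h1.const_mul M₁).add (h2.const_mul M₂)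

lemma aux_concave_pos {g : ℝ → ℝ} {A B l m r : ℝ}
    (hc : StrictConcaveOn ℝ (Set.Icc A B) g)
    (hl : l ∈ Set.Icc A B) (hr : r ∈ Set.Icc A B)
    (hlm : l < m) (hmr : m < r) (h0l : g l = 0) (h0r : g r = 0) : 0 < g m := by
  have hlr : l < r := hlm.trans hmr
  have hrl : 0 < r - l := by linarith
  have ht : 0 < (r - m) / (r - l) := div_pos (by linarith) hrl
  have hs : 0 < (m - l) / (r - l) := div_pos (by linarith) hrl
  have hts : (r - m) / (r - l) + (m - l) / (r - l) = 1 := by field_simp; ring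
  have hcomb : ((r - m) / (r - l)) • l + ((m - l) / (r - l)) • r = m := by
    simp only [smul_eq_mul]; field_simp; ring
  have h := hc.2 hl hr (ne_of_lt hlr) ht hs hts
  rw [hcomb, h0l, h0r] at h
  simpa using h

lemma even_of_odd_deriv {f : ℝ → ℝ} (hf : Differentiable ℝ f)
    (hodd : ∀ x, f (-x) = -f x) : ∀ x, deriv f (-x) = deriv f x := by
  intro x
  have h1 : HasDerivAt (fun y => f (-y)) (deriv f (-x) * (-1)) x :=
    (hf (-x)).hasDerivAt.comp x (hasDerivAt_neg x)
  have h2 : HasDerivAt (fun y => f (-y)) (-(deriv f x)) x := by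
    have he : (fun y => f (-y)) = fun y => -f y := funext hodd
    rw [he]; exact (hf x).hasDerivAt.neg
  have := h1.unique h2
  linarith

lemma odd_of_even_deriv {f : ℝ → ℝ} (hf : Differentiable ℝ f)
    (heven : ∀ x, f (-x) = f x) : ∀ x, deriv f (-x) = -(deriv f x) := by
  intro x
  have h1 : HasDerivAt (fun y => f (-y)) (deriv f (-x) * (-1)) x :=
    (hf (-x)).hasDerivAt.comp x (hasDerivAt_neg x)
  have h2 : HasDerivAt (fun y => f (-y)) (deriv f x) x := by
    have he : (fun y => f (-y)) = f := funext heven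
    rw [he]; exact (hf x).hasDerivAt
  have := h1.unique h2
  linarith



/-- Under the admissibility conditions on the odd kernel `f` (positive root `a`, `f'(0) > 0`,
`f'(a) < 0`, `f''' < 0` on `(0, a)`) and the mass-ratio condition, the two-spike velocity
field `v(x) = M₁ f(x - x₁) + M₂ f(x - x₂)` has a unique zero `xhat` in `(x₁, x₂)`, and
`v'(xhat) > 0` there. -/
theorem unique_interior_stagnation_point
    (f : ℝ → ℝ) (hodd : ∀ x, f (-x) = -f x) (hf : ContDiff ℝ 3 f)
    (a : ℝ) (ha : 0 < a) (hfa : f a = 0)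
    (hfp0 : 0 < deriv f 0) (hfpa : deriv f a < 0)
    (hfppp : ∀ x ∈ Set.Ioo 0 a, deriv (deriv (deriv f)) x < 0)
    (M₁ M₂ : ℝ) (hM₁ : 0 < M₁) (hM₂ : 0 < M₂)
    (hratio₁ : -(deriv f 0) / deriv f a < M₁ / M₂)
    (hratio₂ : M₁ / M₂ < -(deriv f a) / deriv f 0)
    (x₁ x₂ : ℝ) (hx₂ : x₂ = x₁ + a)
    (v : ℝ → ℝ) (hv : ∀ x, v x = M₁ * f (x - x₁) + M₂ * f (x - x₂)) :
    ∃ xhat ∈ Set.Ioo x₁ x₂, v xhat = 0 ∧ 0 < deriv v xhat ∧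
      ∀ y ∈ Set.Ioo x₁ x₂, v y = 0 → y = xhat := by
  have hveq : v = fun x => M₁ * f (x - x₁) + M₂ * f (x - x₂) := funext hv
  subst hveq
  have hx12 : x₁ < x₂ := by rw [hx₂]; linarith
  -- smoothness ladder
  have hd1 : ContDiff ℝ 2 (deriv f) :=
    (contDiff_succ_iff_deriv.mp (show ContDiff ℝ (2 + 1) f by norm_num; exact hf)).2.2
  have hd2 : ContDiff ℝ 1 (deriv (deriv f)) :=
    (contDiff_succ_iff_deriv.mp (show ContDiff ℝ (1 + 1) (deriv f) by norm_num; exact hd1)).2.2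
  have hdf : Differentiable ℝ f := hf.differentiable (by norm_num)
  have hdf1 : Differentiable ℝ (deriv f) := hd1.differentiable (by norm_num)
  have hdf2 : Differentiable ℝ (deriv (deriv f)) := hd2.differentiable (by norm_num)
  -- parity
  have hf0 : f 0 = 0 := by have := hodd 0; simp at this; linarith
  have h1even : ∀ x, deriv f (-x) = deriv f x := even_of_odd_deriv hdf hodd
  have h2odd : ∀ x, deriv (deriv f) (-x) = -(deriv (deriv f) x) := odd_of_even_deriv hdf1 h1even
  have h3even : ∀ x, deriv (deriv (deriv f)) (-x) = deriv (deriv (deriv f)) x :=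
    even_of_odd_deriv hdf2 h2odd
  set v : ℝ → ℝ := fun x => M₁ * f (x - x₁) + M₂ * f (x - x₂) with hvdef
  -- derivatives of v
  have hdv1 : deriv v = fun x => M₁ * deriv f (x - x₁) + M₂ * deriv f (x - x₂) :=
    funext fun x => (twoSpike_hasDerivAt hdf M₁ M₂ x₁ x₂ x).deriv
  have hdv2 : deriv (deriv v) =
      fun x => M₁ * deriv (deriv f) (x - x₁) + M₂ * deriv (deriv f) (x - x₂) := by
    rw [hdv1]; exact funext fun x => (twoSpike_hasDerivAt hdf1 M₁ M₂ x₁ x₂ x).deriv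
  have hdv3 : deriv (deriv (deriv v)) =
      fun x => M₁ * deriv (deriv (deriv f)) (x - x₁) + M₂ * deriv (deriv (deriv f)) (x - x₂) := by
    rw [hdv2]; exact funext fun x => (twoSpike_hasDerivAt hdf2 M₁ M₂ x₁ x₂ x).deriv
  -- continuity
  have hcf : Continuous f := hf.continuous
  have hcf1 : Continuous (deriv f) := hd1.continuous
  have hvc : Continuous v := by
    apply Continuous.add <;> exact continuous_const.mul (hcf.comp (continuous_id.sub continuous_const))
  have hgc : Continuous (deriv v) := by
    rw [hdv1]
    apply Continuous.add <;> exact continuous_const.mul (hcf1.comp (continuous_id.sub continuous_const))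
  -- endpoint values
  have hd21 : x₁ - x₂ = -a := by rw [hx₂]; ring
  have hd12 : x₂ - x₁ = a := by rw [hx₂]; ring
  have hfna : f (-a) = 0 := by rw [hodd, hfa]; ring
  have hv1 : v x₁ = 0 := by simp only [hvdef, sub_self, hf0, hd21, hfna]; ring
  have hv2 : v x₂ = 0 := by simp only [hvdef, sub_self, hf0, hd12, hfa]; ring
  have hfpna : deriv f (-a) = deriv f a := h1even a
  have hg1 : deriv v x₁ = M₁ * deriv f 0 + M₂ * deriv f a := by
    rw [hdv1]; simp only [sub_self, hd21, hfpna]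
  have hg2 : deriv v x₂ = M₁ * deriv f a + M₂ * deriv f 0 := by
    rw [hdv1]; simp only [sub_self, hd12]
  have hgneg1 : deriv v x₁ < 0 := by
    rw [hg1]
    rw [div_lt_div_iff₀ hM₂ hfp0] at hratio₂
    linarith
  have hgneg2 : deriv v x₂ < 0 := by
    rw [hg2]
    have hna : 0 < -(deriv f a) := by linarith
    have h : deriv f 0 / (-(deriv f a)) < M₁ / M₂ := by
      rw [div_neg, ← neg_div]; exact hratio₁
    rw [div_lt_div_iff₀ hna hM₂] at h
    linarith
  -- strict concavity of deriv v
  have hconc : StrictConcaveOn ℝ (Icc x₁ x₂) (deriv v) := by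
    apply strictConcaveOn_of_deriv2_neg (convex_Icc _ _) hgc.continuousOn
    intro x hx
    rw [interior_Icc] at hx
    have hit : deriv^[2] (deriv v) x = deriv (deriv (deriv v)) x := by
      simp [Function.iterate_succ, Function.comp]
    rw [hit, hdv3]
    have h1 : x - x₁ ∈ Ioo 0 a := by
      constructor
      · linarith [hx.1]
      · rw [hx₂] at hx; linarith [hx.2]
    have hA := hfppp _ h1
    have h2 : x₂ - x ∈ Ioo 0 a := by
      constructor
      · linarith [hx.2]
      · rw [hx₂] at hx; linarith [hx.1]
    have hB' := hfppp _ h2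
    have hBe : deriv (deriv (deriv f)) (x - x₂) = deriv (deriv (deriv f)) (x₂ - x) := by
      rw [show x - x₂ = -(x₂ - x) by ring, h3even]
    have hB : deriv (deriv (deriv f)) (x - x₂) < 0 := by rw [hBe]; exact hB'
    have := mul_neg_of_pos_of_neg hM₁ hA
    have := mul_neg_of_pos_of_neg hM₂ hB
    dsimp only
    linarith
  -- local sign points near the endpoints
  have hopen : IsOpen {x : ℝ | deriv v x < 0} := isOpen_lt hgc continuous_const
  obtain ⟨δ₁, hδ₁, hball₁⟩ := Metric.isOpen_iff.mp hopen x₁ hgneg1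
  obtain ⟨δ₂, hδ₂, hball₂⟩ := Metric.isOpen_iff.mp hopen x₂ hgneg2
  set ε : ℝ := min (δ₁ / 2) (min (δ₂ / 2) ((x₂ - x₁) / 3)) with hεdef
  have hε : 0 < ε := by
    apply lt_min (by linarith) (lt_min (by linarith) (by linarith))
  have hε1 : ε ≤ δ₁ / 2 := min_le_left _ _
  have hε2 : ε ≤ δ₂ / 2 := le_trans (min_le_right _ _) (min_le_left _ _)
  have hε3 : ε ≤ (x₂ - x₁) / 3 := le_trans (min_le_right _ _) (min_le_right _ _)
  set q : ℝ := x₁ + ε with hqdef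
  set p : ℝ := x₂ - ε with hpdef
  have hqp : q < p := by simp only [hqdef, hpdef]; linarith
  have hq1 : x₁ < q := by simp only [hqdef]; linarith
  have hq2 : q < x₂ := by linarith
  have hp1 : x₁ < p := by linarith
  have hp2 : p < x₂ := by simp only [hpdef]; linarith
  -- v q < 0
  have hvq : v q < 0 := by
    have hanti : StrictAntiOn v (Icc x₁ q) := by
      apply strictAntiOn_of_deriv_neg (convex_Icc _ _) hvc.continuousOn
      intro x hx
      rw [interior_Icc] at hx
      apply hball₁
      rw [Metric.mem_ball, Real.dist_eq, abs_lt]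
      constructor <;> [linarith [hx.1]; linarith [hx.2]]
    have := hanti (left_mem_Icc.mpr hq1.le) (right_mem_Icc.mpr hq1.le) hq1
    rwa [hv1] at this
  -- 0 < v p
  have hvp : 0 < v p := by
    have hanti : StrictAntiOn v (Icc p x₂) := by
      apply strictAntiOn_of_deriv_neg (convex_Icc _ _) hvc.continuousOn
      intro x hx
      rw [interior_Icc] at hx
      apply hball₂
      rw [Metric.mem_ball, Real.dist_eq, abs_lt]
      constructor <;> [linarith [hx.1]; linarith [hx.2]]
    have := hanti (left_mem_Icc.mpr hp2.le) (right_mem_Icc.mpr hp2.le) hp2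
    rwa [hv2] at this
  -- existence of a zero
  obtain ⟨xhat, hxhat, hvx0⟩ :=
    intermediate_value_Ioo hqp.le hvc.continuousOn (show (0:ℝ) ∈ Ioo (v q) (v p) from ⟨hvq, hvp⟩)
  have hxmem : xhat ∈ Ioo x₁ x₂ := ⟨hq1.trans hxhat.1, hxhat.2.trans hp2⟩
  -- every interior zero has positive derivative
  have hpos : ∀ z ∈ Ioo x₁ x₂, v z = 0 → 0 < deriv v z := by
    intro z hz h0
    obtain ⟨l, hl, hgl⟩ := exists_deriv_eq_zero hz.1 hvc.continuousOn (hv1.trans h0.symm)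
    obtain ⟨r, hr, hgr⟩ := exists_deriv_eq_zero hz.2 hvc.continuousOn (h0.trans hv2.symm)
    exact aux_concave_pos hconc ⟨hl.1.le, (hl.2.trans hz.2).le⟩
      ⟨(hz.1.trans hr.1).le, hr.2.le⟩ hl.2 hr.1 hgl hgr
  -- no two distinct zeros
  have huniq : ∀ y z, y ∈ Ioo x₁ x₂ → z ∈ Ioo x₁ x₂ → v y = 0 → v z = 0 → y < z → False := by
    intro y z hy hz h0y h0z hyz
    obtain ⟨l, hl, hgl⟩ := exists_deriv_eq_zero hy.1 hvc.continuousOn (hv1.trans h0y.symm)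
    obtain ⟨m, hm, hgm⟩ := exists_deriv_eq_zero hyz hvc.continuousOn (h0y.trans h0z.symm)
    obtain ⟨r, hr, hgr⟩ := exists_deriv_eq_zero hz.2 hvc.continuousOn (h0z.trans hv2.symm)
    have h := aux_concave_pos hconc
      ⟨hl.1.le, ((hl.2.trans hy.2)).le⟩ ⟨(hz.1.trans hr.1).le, hr.2.le⟩
      (hl.2.trans hm.1) (hm.2.trans hr.1) hgl hgr
    rw [hgm] at h
    exact lt_irrefl 0 h
  refine ⟨xhat, hxmem, hvx0, hpos _ hxmem hvx0, ?_⟩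
  intro y hy hy0
  rcases lt_trichotomy y xhat with h | h | h
  · exact absurd (huniq y xhat hy hxmem hy0 hvx0 h) not_false
  · exact h
  · exact absurd (huniq xhat y hxmem hy hvx0 hy0 h) not_false
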